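/- Let A be a linear operator on C₀(S) generating a strongly continuous positive contraction semigroup T_t associated with a Markov transition function P(t,x,·) on a locally compact separable metric space S. Suppose x ∈ S, B ⊆ S is closed with x ∉ B, and f ∈ D(A) satisfies 0 ≤ f ≤ 1, f = 1 on B, f = 0 on a neighborhood of x, and A f(x) = 0. Then lim_{t ↓ 0} P(t,x,B)/t ≤ lim_{t ↓ 0} (T_t f(x) − f(x))/t = A f(x) = 0, i.e., P(t,x,B) = o(t) as t ↓ 0. -/

import Mathlib

open Filter Topology MeasureTheory ZeroAtInfty

/-- Dynkin–Kinney criterion at a point: Let P(t,x,·) be a Markov transition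
function on a locally compact separable metric space S, whose semigroup T_t f x = ∫ f dP(t,x)
acts on C₀(S). If x ∈ S, B is closed with x ∉ B, and f ∈ C₀(S) ∩ D(A) satisfies 0 ≤ f ≤ 1,
f ≡ 1 on B, f ≡ 0 on a neighborhood of x, and A f(x) = 0 (i.e. (T_t f(x) − f(x))/t → 0 as
t ↓ 0), then P(t,x,B)/t → 0, i.e. P(t,x,B) = o(t) as t ↓ 0. -/
theorem stmt_19 (S : Type*) [MetricSpace S] [LocallyCompactSpace S]
    [TopologicalSpace.SeparableSpace S] [MeasurableSpace S] [BorelSpace S]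
    (P : ℝ → S → Measure S)
    (hP : ∀ t > (0 : ℝ), ∀ y, IsProbabilityMeasure (P t y))
    -- Chapman–Kolmogorov (semigroup property of the transition function)
    (hCK : ∀ s > (0 : ℝ), ∀ t > (0 : ℝ), ∀ y (B : Set S), MeasurableSet B →
      P (s + t) y B = ∫⁻ y', P t y' B ∂(P s y))
    (x : S) (B : Set S) (hB : IsClosed B) (hxB : x ∉ B)
    (f : C₀(S, ℝ)) (hf01 : ∀ y, f y ∈ Set.Icc (0 : ℝ) 1)
    (hfB : ∀ y ∈ B, f y = 1)
    (U : Set S) (hU : U ∈ 𝓝 x) (hfU : ∀ y ∈ U, f y = 0)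
    -- f is in the domain of the generator, with A f (x) = 0
    (hgen : Tendsto (fun t : ℝ => ((∫ y, f y ∂(P t x)) - f x) / t) (𝓝[>] (0 : ℝ)) (𝓝 0)) :
    Tendsto (fun t : ℝ => (P t x B).toReal / t) (𝓝[>] (0 : ℝ)) (𝓝 0) := by
  have hfx : f x = 0 := hfU x (mem_of_mem_nhds hU)
  have key : ∀ t : ℝ, 0 < t → (P t x B).toReal ≤ ∫ y, f y ∂(P t x) := by
    intro t ht
    haveI := hP t ht x
    have hint : Integrable (fun y => f y) (P t x) := by
      apply Integrable.mono' (integrable_const (1 : ℝ))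
        (f.continuous.measurable.aestronglyMeasurable)
      filter_upwards with y
      rw [Real.norm_eq_abs, abs_le]
      exact ⟨le_trans (by norm_num) (hf01 y).1, (hf01 y).2⟩
    have h1 : (P t x B).toReal = ∫ y in B, f y ∂(P t x) := by
      rw [setIntegral_congr_fun hB.measurableSet hfB, setIntegral_const, smul_eq_mul,
        mul_one]
      rfl
    rw [h1]
    exact setIntegral_le_integral hint (Filter.Eventually.of_forall fun y => (hf01 y).1)
  have hle : ∀ᶠ t in 𝓝[>] (0 : ℝ),
      (P t x B).toReal / t ≤ ((∫ y, f y ∂(P t x)) - f x) / t := by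
    filter_upwards [self_mem_nhdsWithin] with t ht
    have ht : (0 : ℝ) < t := ht
    rw [hfx, sub_zero]
    gcongr
    exact key t ht
  have hge : ∀ᶠ t in 𝓝[>] (0 : ℝ), (0 : ℝ) ≤ (P t x B).toReal / t := by
    filter_upwards [self_mem_nhdsWithin] with t ht
    exact div_nonneg ENNReal.toReal_nonneg (le_of_lt ht)
  exact tendsto_of_tendsto_of_tendsto_of_le_of_le' tendsto_const_nhds hgen hge hle
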